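/- Let M be a Puiseux monoid containing 1/2^k for all k ≥ 0, with M ⊆ ℤ[1/2,1/3]. Every divisor f of x² + x + 1 in the monoid algebra ℤ/2ℤ[x;M] has the form (x^{2/2^k} + x^{1/2^k} + 1)^t for some k ∈ ℕ₀ and t ∈ ℕ (up to units). -/

import Mathlib

open Polynomial

lemma claimA (m : ℕ) : ∃ k : ℕ, 4 ^ (3 ^ m) = 1 + 3 ^ (m+1) + 3 ^ (m+2) * k := by
  induction m with
  | zero => exact ⟨0, by norm_num⟩
  | succ m ih =>
    obtain ⟨k, hk⟩ := ih
    refine ⟨k + 3^m * (1+3*k)^2 + 3^(2*m) * (1+3*k)^3, ?_⟩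
    have h1 : 4 ^ (3 ^ (m+1)) = (4 ^ (3 ^ m)) ^ 3 := by
      rw [← pow_mul, pow_succ]
    rw [h1, hk]
    ring


lemma zmod3pow (b c : ℕ) (h : b + 1 ≤ c) : ((3 : ZMod (3^(b+1))))^c = 0 := by
  have : ((3^c : ℕ) : ZMod (3^(b+1))) = 0 := by
    rw [ZMod.natCast_eq_zero_iff]
    exact pow_dvd_pow 3 h
  push_cast at this; exact this

lemma ord4 (b : ℕ) {e : ℕ} (he : (4 : ZMod (3^(b+1)))^e = 1) : 3^b ∣ e := by
  have hNpos : 0 < 3^(b+1) := pow_pos (by norm_num) _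
  haveI : NeZero (3^(b+1)) := ⟨hNpos.ne'⟩
  have h1 : (4 : ZMod (3^(b+1)))^(3^b) = 1 := by
    obtain ⟨k, hk⟩ := claimA b
    have h := congrArg (Nat.cast : ℕ → ZMod (3^(b+1))) hk
    push_cast at h
    rw [zmod3pow b (b+1) le_rfl, zmod3pow b (b+2) (by omega)] at h
    simpa using h
  have hdvd : orderOf (4 : ZMod (3^(b+1))) ∣ 3^b := orderOf_dvd_of_pow_eq_one h1
  obtain ⟨j, hj, hjo⟩ := (Nat.dvd_prime_pow (by norm_num)).mp hdvd
  have hjb : j = b := by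
    by_contra hne
    have hb1 : 1 ≤ b := by omega
    have h4 : (4 : ZMod (3^(b+1)))^(3^(b-1)) = 1 := by
      apply orderOf_dvd_iff_pow_eq_one.mp
      rw [hjo]; exact pow_dvd_pow 3 (by omega)
    obtain ⟨k, hk⟩ := claimA (b-1)
    rw [show b - 1 + 1 = b by omega, show b - 1 + 2 = b + 1 by omega] at hk
    have hcast := congrArg (Nat.cast : ℕ → ZMod (3^(b+1))) hk
    push_cast at hcast
    rw [zmod3pow b (b+1) le_rfl, h4] at hcast
    have h3b : ((3:ZMod (3^(b+1))))^b ≠ 0 := by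
      intro h0
      have : ((3^b : ℕ) : ZMod (3^(b+1))) = 0 := by push_cast; exact h0
      rw [ZMod.natCast_eq_zero_iff] at this
      have hle := Nat.le_of_dvd (pow_pos (by norm_num) _) this
      have : (3:ℕ)^b < 3^(b+1) := Nat.pow_lt_pow_right (by norm_num) (by omega)
      omega
    exact h3b (by linear_combination -hcast)
  rw [hjb] at hjo
  exact hjo ▸ orderOf_dvd_iff_pow_eq_one.mpr he

lemma deg_bound (b d : ℕ) (hd : 0 < d) (hdvd : 3^(b+1) ∣ 2^d - 1) : 2 * 3^b ≤ d := by
  have h2d : 1 ≤ 2^d := Nat.one_le_two_pow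
  have hNpos : 0 < 3^(b+1) := pow_pos (by norm_num) _
  haveI : NeZero (3^(b+1)) := ⟨hNpos.ne'⟩
  -- d is even
  have h3 : (3:ℕ) ∣ 2^d - 1 := dvd_trans (dvd_pow_self 3 (Nat.succ_ne_zero b)) hdvd
  have heq3 : (2 : ZMod 3)^d = 1 := by
    have : ((2^d - 1 : ℕ) : ZMod 3) = 0 := (ZMod.natCast_eq_zero_iff _ _).mpr h3
    rw [Nat.cast_sub h2d] at this
    push_cast at this
    linear_combination this
  have hdeven : Even d := by
    have h21 : (2 : ZMod 3) = -1 := by decide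
    rw [h21] at heq3
    exact (neg_one_pow_eq_one_iff_even (by decide)).mp heq3
  obtain ⟨e, hde⟩ := hdeven
  have hde' : d = 2 * e := by omega
  have he4 : (4 : ZMod (3^(b+1)))^e = 1 := by
    have : ((2^d - 1 : ℕ) : ZMod (3^(b+1))) = 0 := (ZMod.natCast_eq_zero_iff _ _).mpr hdvd
    rw [Nat.cast_sub h2d] at this
    push_cast at this
    have h2 : (2 : ZMod (3^(b+1)))^d = 1 := by linear_combination this
    rw [hde', pow_mul] at h2
    norm_num at h2
    exact h2
  have := ord4 b he4
  have he0 : 0 < e := by omega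
  have := Nat.le_of_dvd he0 this
  omega

open Polynomial


noncomputable def Cpoly (m : ℕ) : (ZMod 2)[X] := X^(2*m) + X^m + 1

lemma Cpoly_monic {m : ℕ} (hm : 0 < m) : (Cpoly m).Monic := by
  unfold Cpoly
  have h2m : m < 2*m := by omega
  monicity! <;>
    simp [Nat.not_le.mpr h2m, hm.ne', h2m.ne', h2m.le]

lemma Cpoly_natDegree {m : ℕ} (hm : 0 < m) : (Cpoly m).natDegree = 2*m := by
  unfold Cpoly
  have h2m : m < 2*m := by omega
  compute_degree! <;>
    first
    | simp [Nat.not_le.mpr h2m, hm.ne', h2m.ne', h2m.le]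
    | omega

lemma Cpoly_root_bound {b : ℕ} {r : (ZMod 2)[X]} (hirr : Irreducible r)
    (hdvd : r ∣ Cpoly (3^b)) : 2 * 3^b ≤ r.natDegree := by
  haveI : Fact (Irreducible r) := ⟨hirr⟩
  have hr0 : r ≠ 0 := hirr.ne_zero
  set K := AdjoinRoot r
  haveI : Module.Finite (ZMod 2) K := Module.Finite.of_basis (AdjoinRoot.powerBasis hr0).basis
  haveI : Finite K := Module.finite_of_finite (ZMod 2)
  haveI : Fintype K := Fintype.ofFinite K
  have hcard : Fintype.card K = 2 ^ r.natDegree := by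
    rw [Module.card_eq_pow_finrank (K := ZMod 2) (V := K), ZMod.card,
      (AdjoinRoot.powerBasis hr0).finrank, AdjoinRoot.powerBasis_dim]
  set ζ : K := AdjoinRoot.root r with hζ
  have hroot : ζ^(2*3^b) + ζ^(3^b) + 1 = 0 := by
    obtain ⟨s, hs⟩ := hdvd
    have := congrArg (AdjoinRoot.mk r) hs
    rw [map_mul, AdjoinRoot.mk_self, zero_mul] at this
    unfold Cpoly at this
    simpa [map_add, map_pow, AdjoinRoot.mk_X] using this
  have hchar : (2 : K) = 0 := by
    haveI : CharP K 2 := charP_of_injective_algebraMap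
      (algebraMap (ZMod 2) K).injective 2
    exact_mod_cast CharP.cast_eq_zero K 2
  have hζ0 : ζ ≠ 0 := by
    intro h0
    rw [h0, zero_pow (by positivity : (0:ℕ) < 2*3^b).ne',
      zero_pow (by positivity : (0:ℕ) < 3^b).ne'] at hroot
    norm_num at hroot
  set w : K := ζ^(3^b) with hw
  have hw2 : w^2 + w + 1 = 0 := by
    rw [hw, ← pow_mul, mul_comm (3^b) 2]; exact hroot
  have hwne1 : w ≠ 1 := by
    intro h1
    rw [h1] at hw2
    have : (1:K) = 0 := by linear_combination hw2 - hchar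
    simp at this
  have hw3 : w^3 = 1 := by
    have h := sub_eq_zero.mp (by linear_combination (w - 1) * hw2 : w^3 - 1 = 0)
    exact h
  have hζpow : ζ^(3^(b+1)) = 1 := by
    rw [pow_succ, pow_mul, ← hw, hw3]
  have hdvd1 : orderOf ζ ∣ 3^(b+1) := orderOf_dvd_of_pow_eq_one hζpow
  obtain ⟨j, hj, hjo⟩ := (Nat.dvd_prime_pow (by norm_num)).mp hdvd1
  have hjeq : j = b + 1 := by
    by_contra hne
    have : ζ^(3^b) = 1 := by
      apply orderOf_dvd_iff_pow_eq_one.mp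
      rw [hjo]; exact pow_dvd_pow 3 (by omega)
    exact hwne1 this
  have hord : orderOf ζ = 3^(b+1) := hjeq ▸ hjo
  have hdvd2 : 3^(b+1) ∣ Fintype.card K - 1 := by
    rw [← hord]
    exact orderOf_dvd_of_pow_eq_one (FiniteField.pow_card_sub_one_eq_one ζ hζ0)
  rw [hcard] at hdvd2
  exact deg_bound b r.natDegree hirr.natDegree_pos hdvd2

lemma Cpoly_irreducible (b : ℕ) : Irreducible (Cpoly (3^b)) := by
  have hm : 0 < 3^b := pow_pos (by norm_num) b
  have hmon := Cpoly_monic hm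
  have hdeg := Cpoly_natDegree hm
  constructor
  · intro hu
    have := natDegree_eq_zero_of_isUnit hu
    omega
  · intro p q heq
    by_contra hpq
    push_neg at hpq
    obtain ⟨hp, hq⟩ := hpq
    have h0 : p * q ≠ 0 := heq ▸ hmon.ne_zero
    have hp0 : p ≠ 0 := fun h => h0 (by simp [h])
    have hq0 : q ≠ 0 := fun h => h0 (by simp [h])
    obtain ⟨r, hrirr, hrdvd⟩ := WfDvdMonoid.exists_irreducible_factor hp hp0
    have hrC : r ∣ Cpoly (3^b) := heq ▸ (hrdvd.trans (dvd_mul_right p q))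
    have hrb := Cpoly_root_bound hrirr hrC
    have h1 : r.natDegree ≤ p.natDegree := natDegree_le_of_dvd hrdvd hp0
    have h2 : p.natDegree + q.natDegree = 2 * 3^b := by
      rw [← natDegree_mul hp0 hq0, ← heq, hdeg]
    have hq1 : 0 < q.natDegree := by
      rcases Nat.eq_zero_or_pos q.natDegree with h | h
      · exfalso
        apply hq
        have hqc := Polynomial.eq_C_of_natDegree_eq_zero h
        rw [hqc]
        refine isUnit_C.mpr (isUnit_iff_ne_zero.mpr fun hc => hq0 ?_)
        rw [hqc, hc, map_zero]
      · exact h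
    omega

open Polynomial



lemma Cpoly_sq (m : ℕ) : (Cpoly m)^2 = Cpoly (2*m) := by
  unfold Cpoly
  haveI : CharP ((ZMod 2)[X]) 2 := by infer_instance
  rw [add_pow_char, add_pow_char, one_pow, ← pow_mul, ← pow_mul]
  ring_nf

lemma Cpoly_pow (a b : ℕ) : (Cpoly (3^b))^(2^a) = Cpoly (2^a * 3^b) := by
  induction a with
  | zero => simp
  | succ a ih =>
    rw [pow_succ, pow_mul, ih, Cpoly_sq]
    ring_nf

lemma unit_eq_one {u : (ZMod 2)[X]} (hu : IsUnit u) : u = 1 := by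
  obtain ⟨r, hr, hCr⟩ := Polynomial.isUnit_iff.mp hu
  have h2 : ∀ s : ZMod 2, s ≠ 0 → s = 1 := by decide
  have : r = 1 := h2 r hr.ne_zero
  rw [← hCr, this, map_one]

lemma key_poly (a b : ℕ) (p q : (ZMod 2)[X])
    (hpq : p * q = Cpoly (2^a * 3^b)) : ∃ t : ℕ, p = (Cpoly (3^b))^t := by
  have hprime : Prime (Cpoly (3^b)) := (Cpoly_irreducible b).prime
  have hdvd : p ∣ (Cpoly (3^b))^(2^a) := by
    rw [Cpoly_pow]; exact ⟨q, hpq.symm⟩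
  obtain ⟨t, _, hassoc⟩ := (dvd_prime_pow hprime _).mp hdvd
  obtain ⟨u, hu⟩ := hassoc
  refine ⟨t, ?_⟩
  rw [← hu, unit_eq_one u.isUnit, mul_one]




theorem divisors_of_x2_x_1 (M : AddSubmonoid ℚ)
    (hpos : ∀ x ∈ M, 0 ≤ x)
    (hsub : ∀ x ∈ M, ∃ (z : ℤ) (i j : ℕ), x = (z : ℚ) / (2 ^ i * 3 ^ j))
    (h : ∀ k : ℕ, (1 : ℚ) / 2 ^ k ∈ M) :
    ∀ f g : AddMonoidAlgebra (ZMod 2) M,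
      f * g = AddMonoidAlgebra.single (⟨2, by have := M.add_mem (h 0) (h 0); norm_num at this; exact this⟩ : M) 1
            + AddMonoidAlgebra.single (⟨1, by have := h 0; norm_num at this; exact this⟩ : M) 1 + 1 →
      ∃ k t : ℕ,
        f = (AddMonoidAlgebra.single (⟨2 / 2 ^ k, by
                have := M.add_mem (h k) (h k)
                rwa [show (1:ℚ)/2^k + 1/2^k = 2/2^k by ring] at this⟩ : M) 1
          + AddMonoidAlgebra.single (⟨1 / 2 ^ k, h k⟩ : M) 1 + 1) ^ t := by
  intro f g hfg
  classical
  -- common denominator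
  have hch : ∀ q : M, ∃ (z : ℤ) (i j : ℕ), (q:ℚ) = (z:ℚ) / (2^i*3^j) := fun q => hsub q q.2
  choose z i j hz using hch
  set S : Finset M := f.coeff.support ∪ g.coeff.support with hS
  set a : ℕ := S.sup i with ha
  set b : ℕ := S.sup j with hb
  set N : ℕ := 2^a * 3^b with hN
  have hNpos : (0:ℚ) < N := by positivity
  have hNq : ∀ q ∈ S, ∃ m : ℕ, (N:ℚ) * (q:ℚ) = m := by
    intro q hq
    have hiq : i q ≤ a := Finset.le_sup hq
    have hjq : j q ≤ b := Finset.le_sup hq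
    have h2 : (2:ℚ)^a = 2^(a - i q) * 2^(i q) := by rw [← pow_add, Nat.sub_add_cancel hiq]
    have h3 : (3:ℚ)^b = 3^(b - j q) * 3^(j q) := by rw [← pow_add, Nat.sub_add_cancel hjq]
    have hcalc : (N:ℚ) * (q:ℚ) = ((z q * 2^(a - i q) * 3^(b - j q) : ℤ) : ℚ) := by
      rw [hN]
      push_cast
      rw [hz q, h2, h3]
      have h20 : (2:ℚ)^(i q) ≠ 0 := by positivity
      have h30 : (3:ℚ)^(j q) ≠ 0 := by positivity
      field_simp
    have hw0 : (0:ℤ) ≤ z q * 2^(a - i q) * 3^(b - j q) := by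
      have : (0:ℚ) ≤ ((z q * 2^(a - i q) * 3^(b - j q) : ℤ) : ℚ) := by
        rw [← hcalc]; exact mul_nonneg hNpos.le (hpos q q.2)
      exact_mod_cast this
    exact ⟨(z q * 2^(a - i q) * 3^(b - j q)).toNat, by
      rw [hcalc]; exact_mod_cast (Int.toNat_of_nonneg hw0).symm⟩
  -- the embedding maps
  set σ : M →+ ℚ := (AddMonoidHom.mulLeft (N:ℚ)).comp M.subtype with hσ
  have hσapp : ∀ q : M, σ q = (N:ℚ) * (q:ℚ) := fun q => rfl
  have hσinj : Function.Injective σ := by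
    intro x y hxy
    have : (N:ℚ) * (x:ℚ) = (N:ℚ) * (y:ℚ) := hxy
    exact Subtype.ext (mul_left_cancel₀ hNpos.ne' this)
  set e : AddMonoidAlgebra (ZMod 2) M →+* AddMonoidAlgebra (ZMod 2) ℚ :=
    AddMonoidAlgebra.mapDomainRingHom (ZMod 2) σ with he
  have heinj : Function.Injective e := AddMonoidAlgebra.mapDomain_injective hσinj
  set ν : AddMonoidAlgebra (ZMod 2) ℕ →+* AddMonoidAlgebra (ZMod 2) ℚ :=
    AddMonoidAlgebra.mapDomainRingHom (ZMod 2) (Nat.castAddMonoidHom ℚ) with hν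
  have hνinj : Function.Injective ν := AddMonoidAlgebra.mapDomain_injective Nat.cast_injective
  -- pull back f and g
  have hpull : ∀ u : AddMonoidAlgebra (ZMod 2) M, u.coeff.support ⊆ S →
      ∃ P : AddMonoidAlgebra (ZMod 2) ℕ, ν P = e u := by
    intro u hu
    have hsupp : ↑(e u).coeff.support ⊆ Set.range ((Nat.castAddMonoidHom ℚ) : ℕ → ℚ) := by
      intro x hx
      have := Finsupp.mapDomain_support (f := σ) (s := u.coeff) hx
      obtain ⟨q, hq, rfl⟩ := Finset.mem_image.mp this
      obtain ⟨m, hm⟩ := hNq q (hu hq)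
      exact ⟨m, by simpa [hσapp] using hm.symm⟩
    refine ⟨AddMonoidAlgebra.comapDomain (Nat.cast : ℕ → ℚ) Nat.cast_injective (e u), ?_⟩
    show AddMonoidAlgebra.mapDomain (Nat.castAddMonoidHom ℚ) _ = e u
    exact AddMonoidAlgebra.mapDomain_comapDomain (f := (Nat.cast : ℕ → ℚ))
      (by exact_mod_cast hsupp) Nat.cast_injective
  obtain ⟨P, hP⟩ := hpull f (by intro x hx; exact Finset.mem_union_left _ hx)
  obtain ⟨Q, hQ⟩ := hpull g (by intro x hx; exact Finset.mem_union_right _ hx)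
  -- the product equation in F2[ℕ]
  have hprod : P * Q = AddMonoidAlgebra.single (2*N) 1 + AddMonoidAlgebra.single N 1 + 1 := by
    apply hνinj
    rw [map_mul, hP, hQ, ← map_mul, hfg]
    rw [map_add, map_add, map_one, map_add, map_add, map_one]
    show AddMonoidAlgebra.mapDomain σ _ + AddMonoidAlgebra.mapDomain σ _ + 1
      = AddMonoidAlgebra.mapDomain (Nat.cast : ℕ → ℚ) _ + AddMonoidAlgebra.mapDomain (Nat.cast : ℕ → ℚ) _ + 1
    rw [AddMonoidAlgebra.mapDomain_single, AddMonoidAlgebra.mapDomain_single,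
      AddMonoidAlgebra.mapDomain_single, AddMonoidAlgebra.mapDomain_single]
    congr 3
    · show (N:ℚ) * (2:ℚ) = ((2*N : ℕ):ℚ); push_cast; ring
    · show (N:ℚ) * (1:ℚ) = ((N : ℕ):ℚ); push_cast; ring
  -- to polynomials
  set iso := Polynomial.toFinsuppIso (ZMod 2) with hiso
  set p : (ZMod 2)[X] := iso.symm P with hp
  set q : (ZMod 2)[X] := iso.symm Q with hq
  have hsingle : ∀ n : ℕ, iso.symm (AddMonoidAlgebra.single n (1 : ZMod 2)) = X^n := by
    intro n
    rw [X_pow_eq_monomial]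
    show ((⟨AddMonoidAlgebra.single n 1⟩ : (ZMod 2)[X]) = _)
    rw [Polynomial.ofFinsupp_single]
  have hpq : p * q = Cpoly N := by
    rw [hp, hq, ← map_mul, hprod, map_add, map_add, map_one, hsingle, hsingle]
    unfold Cpoly
    rw [hN]
  obtain ⟨t, ht⟩ := key_poly a b p q (by rw [hpq, hN])
  -- transfer back
  refine ⟨a, t, ?_⟩
  apply heinj
  have hPt : P = (AddMonoidAlgebra.single (2*3^b) 1 + AddMonoidAlgebra.single (3^b) 1 + 1)^t := by
    have := congrArg iso (ht)
    rw [hp, RingEquiv.apply_symm_apply] at this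
    rw [this, map_pow]
    congr 1
    unfold Cpoly
    rw [map_add, map_add, map_one]
    show (X ^ (2 * 3 ^ b)).toFinsupp + (X ^ (3^b)).toFinsupp + 1 = _
    rw [X_pow_eq_monomial, X_pow_eq_monomial, toFinsupp_monomial, toFinsupp_monomial]
    try rfl
  rw [← hP, hPt, map_pow, map_pow]
  congr 1
  rw [map_add, map_add, map_one, map_add, map_add, map_one]
  show AddMonoidAlgebra.mapDomain (Nat.cast : ℕ → ℚ) _ + AddMonoidAlgebra.mapDomain (Nat.cast : ℕ → ℚ) _ + 1
    = AddMonoidAlgebra.mapDomain σ _ + AddMonoidAlgebra.mapDomain σ _ + 1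
  rw [AddMonoidAlgebra.mapDomain_single, AddMonoidAlgebra.mapDomain_single,
    AddMonoidAlgebra.mapDomain_single, AddMonoidAlgebra.mapDomain_single]
  congr 3
  · show (((2*3^b : ℕ)):ℚ) = (N:ℚ) * (2/2^a)
    rw [hN]; push_cast
    have : (2:ℚ)^a ≠ 0 := by positivity
    field_simp
    try ring
  · show (((3^b : ℕ)):ℚ) = (N:ℚ) * (1/2^a)
    rw [hN]; push_cast
    have : (2:ℚ)^a ≠ 0 := by positivity
    field_simp
    try ring
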